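/- Let c be a constant and define K(x,y) = -½ √(c(x²-y²)) J₁(√(c(x²-y²)))/(x-y). Then H(s,t) := K(s+t, s-t) = -√(cst) J₁(2√(cst))/(2t) satisfies the Goursat problem ∂²H/∂s∂t = -c H, H(s,0) = -cs/2, H(0,t) = 0. -/

import Mathlib

open MeasureTheory

lemma summable_aux (q : ℝ) (hq : 0 ≤ q) :
    Summable (fun k : ℕ => (k + 1 : ℝ) * q ^ k / k.factorial) := by
  apply Summable.of_nonneg_of_le (fun k => by positivity) (fun k => ?_)
    (Real.summable_pow_div_factorial (2 * q))
  have h1 : (k + 1 : ℝ) ≤ 2 ^ k := by exact_mod_cast Nat.lt_two_pow_self (n := k)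
  calc (k + 1 : ℝ) * q ^ k / k.factorial ≤ 2 ^ k * q ^ k / k.factorial := by gcongr
    _ = (2 * q) ^ k / k.factorial := by rw [mul_pow]

lemma norm_term_le (a : ℕ → ℝ) (e : ℕ → ℕ) (he : ∀ k, e k ≤ k + 1)
    (C r : ℝ) (ha : ∀ k, |a k| ≤ C * r ^ k / k.factorial)
    (M : ℝ) (hM1 : (1 : ℝ) ≤ M) (k : ℕ) (y : ℝ) (hy : |y| ≤ M) :
    ‖a k * ((e k : ℝ) * y ^ (e k - 1))‖ ≤ C * ((k + 1 : ℝ) * (r * M) ^ k / k.factorial) := by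
  have hb1 : |y| ^ (e k - 1) ≤ M ^ k := by
    calc |y| ^ (e k - 1) ≤ M ^ (e k - 1) := by gcongr
      _ ≤ M ^ k := pow_le_pow_right₀ hM1 (by have := he k; omega)
  calc ‖a k * ((e k : ℝ) * y ^ (e k - 1))‖
      = |a k| * ((e k : ℝ) * |y| ^ (e k - 1)) := by
        rw [norm_mul, norm_mul, norm_pow]; simp [abs_of_nonneg]
    _ ≤ (C * r ^ k / k.factorial) * ((k + 1 : ℝ) * M ^ k) := by
        have he' : (e k : ℝ) ≤ (k : ℝ) + 1 := by exact_mod_cast he k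
        exact mul_le_mul (ha k) (mul_le_mul he' hb1 (by positivity) (by positivity))
          (by positivity) ((abs_nonneg _).trans (ha k))
    _ = C * ((k + 1 : ℝ) * (r * M) ^ k / k.factorial) := by rw [mul_pow]; ring

lemma key_summable (a : ℕ → ℝ) (e : ℕ → ℕ) (he : ∀ k, e k ≤ k + 1)
    (C r : ℝ) (hr : 0 ≤ r) (ha : ∀ k, |a k| ≤ C * r ^ k / k.factorial) (y : ℝ) :
    Summable fun k => a k * ((e k : ℝ) * y ^ (e k - 1)) := by
  set M := |y| + 1 with hM
  have hM1 : (1 : ℝ) ≤ M := by have := abs_nonneg y; linarith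
  exact Summable.of_norm_bounded (((summable_aux (r * M) (by positivity)).mul_left C))
    (fun k => norm_term_le a e he C r ha M hM1 k y (by have := abs_nonneg y; linarith))

lemma key (a : ℕ → ℝ) (e : ℕ → ℕ) (he : ∀ k, e k ≤ k + 1) (he0 : ∀ k, k ≠ 0 → e k ≠ 0)
    (C r : ℝ) (hr : 0 ≤ r) (ha : ∀ k, |a k| ≤ C * r ^ k / k.factorial) (x : ℝ) :
    HasDerivAt (fun y => ∑' k : ℕ, a k * y ^ (e k))
      (∑' k : ℕ, a k * ((e k : ℝ) * x ^ (e k - 1))) x := by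
  have hC : 0 ≤ C := by
    have := (abs_nonneg (a 0)).trans (ha 0); simpa using this
  set R := |x| + 1 with hR
  have hR1 : (1 : ℝ) ≤ R := by have := abs_nonneg x; linarith
  refine hasDerivAt_tsum_of_isPreconnected
    (u := fun k : ℕ => C * ((k + 1 : ℝ) * (r * R) ^ k / k.factorial))
    (((summable_aux (r * R) (by positivity)).mul_left C))
    (Metric.isOpen_ball (x := (0:ℝ)) (ε := R)) ((convex_ball (0:ℝ) R).isPreconnected)
    (fun k y _ => ((hasDerivAt_pow (e k) y).const_mul (a k)))
    (fun k y hy => ?_) (y₀ := 0) ?_ ?_ ?_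
  · rw [mem_ball_zero_iff] at hy
    exact norm_term_le a e he C r ha R hR1 k y (le_of_lt (by simpa using hy))
  · rw [mem_ball_zero_iff]; simp only [norm_zero]; linarith
  · apply summable_of_ne_finset_zero (s := ({0} : Finset ℕ))
    intro k hk
    simp only [Finset.mem_singleton] at hk
    rw [zero_pow (he0 k hk), mul_zero]
  · rw [mem_ball_zero_iff]
    have := abs_nonneg x
    simp only [Real.norm_eq_abs]; linarith


/-- The Bessel function of the first kind of order 1, defined by its power series. -/
noncomputable def besselJ1 (x : ℝ) : ℝ :=
  ∑' k : ℕ, (-1) ^ k * x ^ (2 * k + 1) /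
    (2 ^ (2 * k + 1) * (k.factorial : ℝ) * ((k + 1).factorial : ℝ))

/-- The transmutation kernel for `d²/dx² + c`. -/
noncomputable def transmutK (c x y : ℝ) : ℝ :=
  -(1 / 2) * Real.sqrt (c * (x ^ 2 - y ^ 2)) *
    besselJ1 (Real.sqrt (c * (x ^ 2 - y ^ 2))) / (x - y)

/-- The Goursat-problem solution `H(s,t) = -√(cst) J₁(2√(cst))/(2t)`, given by its
(everywhere convergent) power series which extends the closed formula to all points. -/
noncomputable def goursatH (c s t : ℝ) : ℝ :=
  -∑' k : ℕ, (-1) ^ k * c ^ (k + 1) * s ^ (k + 1) * t ^ k /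
    (2 * (k.factorial : ℝ) * ((k + 1).factorial : ℝ))


lemma coef_bound (x y d : ℝ) (k : ℕ) (hd : (k.factorial : ℝ) ≤ d) :
    |(-((-1) ^ k * x ^ (k + 1) * y ^ k / d))| ≤ |x| * |x * y| ^ k / k.factorial := by
  have hk : (0:ℝ) < k.factorial := by exact_mod_cast k.factorial_pos
  have hd0 : (0:ℝ) < d := lt_of_lt_of_le hk hd
  rw [abs_neg, abs_div, abs_of_pos hd0]
  have hnum : |(-1:ℝ) ^ k * x ^ (k + 1) * y ^ k| = |x| * |x * y| ^ k := by
    simp only [abs_mul, abs_pow, abs_neg, abs_one, one_pow, one_mul, pow_succ]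
    ring
  rw [hnum]
  exact div_le_div_of_nonneg_left (by positivity) hk hd


/-- `H(s,t) = K(s+t, s-t) = -√(cst) J₁(2√(cst))/(2t)` solves the Goursat problem
`∂²H/∂s∂t = -cH`, `H(s,0) = -cs/2`, `H(0,t) = 0`. -/
theorem stmt8 (c : ℝ) :
    (∀ s t : ℝ, t ≠ 0 → 0 ≤ c * s * t →
      transmutK c (s + t) (s - t) = goursatH c s t ∧
      goursatH c s t
        = -(Real.sqrt (c * s * t) * besselJ1 (2 * Real.sqrt (c * s * t))) / (2 * t)) ∧
    (∀ s t : ℝ,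
      deriv (fun t' => deriv (fun s' => goursatH c s' t') s) t = -c * goursatH c s t) ∧
    (∀ s : ℝ, goursatH c s 0 = -(c * s) / 2) ∧
    (∀ t : ℝ, goursatH c 0 t = 0) := by
  have hfac : ∀ k : ℕ, ((k.factorial : ℝ)) ≠ 0 := fun k => by
    exact_mod_cast k.factorial_ne_zero
  have hfac1 : ∀ k : ℕ, (1:ℝ) ≤ k.factorial := fun k => by
    exact_mod_cast k.factorial_pos
  have hGA : ∀ s t : ℝ, goursatH c s t
      = ∑' k : ℕ, (-((-1)^k * c^(k+1) * t^k /
          (2 * (k.factorial:ℝ) * ((k+1).factorial:ℝ)))) * s^(k+1) := by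
    intro s t
    rw [goursatH, ← tsum_neg]
    exact tsum_congr fun k => by ring
  refine ⟨?_, ?_, ?_, ?_⟩
  · -- part 1
    intro s t ht hu
    have hs2 : Real.sqrt (c * ((s+t)^2 - (s-t)^2)) = 2 * Real.sqrt (c*s*t) := by
      rw [show c * ((s+t)^2 - (s-t)^2) = 2^2 * (c*s*t) by ring,
        Real.sqrt_mul (by norm_num), Real.sqrt_sq (by norm_num : (0:ℝ) ≤ 2)]
    have hG : goursatH c s t
        = -(Real.sqrt (c*s*t) * besselJ1 (2 * Real.sqrt (c*s*t))) / (2*t) := by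
      rw [besselJ1, ← tsum_mul_left, ← tsum_neg, ← tsum_div_const, goursatH, ← tsum_neg]
      apply tsum_congr
      intro k
      have h2 : Real.sqrt (c*s*t) * Real.sqrt (c*s*t) ^ (2*k+1) = (c*s*t)^(k+1) := by
        rw [← pow_succ', show 2*k+1+1 = 2*(k+1) by ring, pow_mul, Real.sq_sqrt hu]
      have h5 : Real.sqrt (c*s*t) * ((-1:ℝ)^k * (2 * Real.sqrt (c*s*t))^(2*k+1) /
            (2^(2*k+1) * (k.factorial:ℝ) * ((k+1).factorial:ℝ)))
          = (-1:ℝ)^k * (2^(2*k+1) * (c*s*t)^(k+1)) /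
            (2^(2*k+1) * (k.factorial:ℝ) * ((k+1).factorial:ℝ)) := by
        rw [mul_div_assoc']
        congr 1
        rw [mul_pow]
        linear_combination ((-1:ℝ)^k * (2:ℝ)^(2*k+1)) * h2
      rw [h5]
      have h6 : ((2:ℝ)^(2*k+1)) ≠ 0 := by positivity
      field_simp
      ring
    refine ⟨?_, hG⟩
    rw [transmutK, hs2, show s + t - (s - t) = 2*t by ring, hG]
    ring
  · -- part 2
    intro s t
    set A : ℝ → ℕ → ℝ := fun t' k => -((-1)^k * c^(k+1) * t'^k /
      (2 * (k.factorial:ℝ) * ((k+1).factorial:ℝ))) with hA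
    set B : ℕ → ℝ := fun k => -((-1)^k * c^(k+1) * s^k /
      (2 * (k.factorial:ℝ) * (k.factorial:ℝ))) with hB
    have hAb : ∀ t' k, |A t' k| ≤ |c| * |c*t'|^k / k.factorial := by
      intro t' k
      apply coef_bound
      have := hfac1 k; have := hfac1 (k+1)
      nlinarith
    have hBb : ∀ k, |B k| ≤ |c| * |c*s|^k / k.factorial := by
      intro k
      apply coef_bound
      have := hfac1 k
      nlinarith
    have hD : ∀ t', deriv (fun s' => goursatH c s' t') s = ∑' k : ℕ, B k * t'^k := by
      intro t'
      have h1 : (fun s' => goursatH c s' t') = fun s' => ∑' k : ℕ, A t' k * s'^(k+1) :=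
        funext fun s' => hGA s' t'
      rw [h1]
      have h2 := (key (A t') (fun k => k+1) (fun k => le_refl _)
        (fun k _ => Nat.succ_ne_zero k) |c| |c*t'| (abs_nonneg _) (hAb t') s).deriv
      refine Eq.trans h2 (tsum_congr fun k => ?_)
      have hf : (((k+1).factorial : ℝ)) = (k+1) * k.factorial := by
        exact_mod_cast Nat.factorial_succ k
      simp only [hA, hB, Nat.add_sub_cancel]
      have := hfac k
      push_cast [hf]
      field_simp
    rw [funext hD]
    have h3 := (key B (fun k => k) (fun k => Nat.le_succ k) (fun k hk => hk)
      |c| |c*s| (abs_nonneg _) hBb t).deriv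
    refine Eq.trans h3 ?_
    have hsum := key_summable B (fun k => k) (fun k => Nat.le_succ k)
      |c| |c*s| (abs_nonneg _) hBb t
    rw [Summable.tsum_eq_zero_add hsum, goursatH, neg_mul_neg, ← tsum_mul_left]
    simp only [Nat.cast_zero, zero_mul, mul_zero, zero_add, Nat.add_sub_cancel]
    apply tsum_congr
    intro k
    have hf : (((k+1).factorial : ℝ)) = (k+1) * k.factorial := by
      exact_mod_cast Nat.factorial_succ k
    simp only [hB]
    have := hfac k
    push_cast [hf]
    field_simp
    ring
  · -- part 3
    intro s
    rw [goursatH, tsum_eq_single 0 (fun k hk => by simp [zero_pow hk])]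
    norm_num [Nat.factorial]
    ring
  · -- part 4
    intro t
    simp [goursatH]
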